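/- arXiv:1908.07145 — 2 statements merged into one kernel-verified Lean document; each statement's English description precedes it below -/
import Mathlib

section
/- Let ρ ∈ (−1,1) and let μ_ρ be the probability measure on ℝ² with density p_{0,ρ}(x,y) = (2π√(1−ρ²))⁻¹ exp(−(x²−2ρxy+y²)/(2(1−ρ²))) with respect to Lebesgue measure. Then for all real s and t, the characteristic function φ(s,t) = ∫_{ℝ²} exp(i(s x² + t y²)) dμ_ρ(x,y) satisfies φ(s,t)² = (1−ρ²) / ((1−2is(1−ρ²))(1−2it(1−ρ²)) − ρ²), where i is the imaginary unit. -/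
open MeasureTheory

/-- The density `p_{0,ρ}` of the two-dimensional normal distribution with standard normal
marginals and correlation coefficient `ρ`. -/
noncomputable def binormalDensity (ρ : ℝ) (p : ℝ × ℝ) : ℝ :=
  1 / (2 * Real.pi * Real.sqrt (1 - ρ ^ 2))
    * Real.exp (-(p.1 ^ 2 - 2 * ρ * p.1 * p.2 + p.2 ^ 2) / (2 * (1 - ρ ^ 2)))

open Complex NNReal ENNReal

set_option maxHeartbeats 2000000

/-- The characteristic function `φ(s,t) = E[exp(i(s x² + t y²))]` of `(x², y²)` under the
two-dimensional normal distribution with density `p_{0,ρ}` satisfies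
`φ(s,t)² = (1-ρ²)/((1-2is(1-ρ²))(1-2it(1-ρ²)) - ρ²)`. -/
theorem char_fun_sq_of_binormal (ρ : ℝ) (hρ1 : -1 < ρ) (hρ2 : ρ < 1) (s t : ℝ) :
    (∫ p : ℝ × ℝ, Complex.exp (Complex.I * ((s : ℂ) * (p.1 : ℂ) ^ 2 + (t : ℂ) * (p.2 : ℂ) ^ 2))
        ∂((volume : Measure (ℝ × ℝ)).withDensity
            (fun p => ENNReal.ofReal (binormalDensity ρ p)))) ^ 2
      = (1 - (ρ : ℂ) ^ 2)
        / ((1 - 2 * Complex.I * (s : ℂ) * (1 - (ρ : ℂ) ^ 2))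
            * (1 - 2 * Complex.I * (t : ℂ) * (1 - (ρ : ℂ) ^ 2)) - (ρ : ℂ) ^ 2) := by
  have hσ2 : (0:ℝ) < 1 - ρ^2 := by nlinarith
  have hdef : ∀ p : ℝ × ℝ, binormalDensity ρ p
      = 1 / (2 * Real.pi * Real.sqrt (1 - ρ^2))
        * Real.exp (-(p.1 ^ 2 - 2 * ρ * p.1 * p.2 + p.2 ^ 2) / (2 * (1 - ρ^2))) :=
    fun p => rfl
  set σ2 : ℝ := 1 - ρ^2 with hσ2def
  clear_value σ2
  have hsqrt : 0 < Real.sqrt σ2 := Real.sqrt_pos.mpr hσ2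
  have hπ : (0:ℝ) < Real.pi := Real.pi_pos
  set C : ℝ := 1 / (2 * Real.pi * Real.sqrt σ2) with hCdef
  have hC : 0 < C := by positivity
  clear_value C
  have hσ2C : (σ2 : ℂ) ≠ 0 := Complex.ofReal_ne_zero.mpr hσ2.ne'
  have hcast : (σ2 : ℂ) = 1 - (ρ:ℂ)^2 := by rw [hσ2def]; push_cast; ring
  set b1 : ℂ := Complex.I * t - 1/(2*σ2) with hb1def
  clear_value b1
  have hb1re : b1.re = -(1/(2*σ2)) := by
    simp [hb1def, Complex.div_re, Complex.normSq]
  have hb1im : b1.im = t := by simp [hb1def]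
  have hb1relt : b1.re < 0 := by rw [hb1re]; exact neg_lt_zero.mpr (by positivity)
  have hb1ne : b1 ≠ 0 := fun h => by rw [h] at hb1relt; simp at hb1relt
  set k : ℝ := (ρ/σ2)^2/4 with hkdef
  clear_value k
  set b2 : ℂ := Complex.I * s - 1/(2*σ2) - (k:ℂ)/b1 with hb2def
  clear_value b2
  have hnsq : Complex.normSq b1 = (1/(2*σ2))^2 + t^2 := by
    rw [Complex.normSq_apply, hb1re, hb1im]; ring
  have hb2re : b2.re < 0 := by
    have h1 : b2.re = -(1/(2*σ2)) - k * b1.re / Complex.normSq b1 := by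
      simp [hb2def, Complex.div_re, hb1re, hb1im]
    have hden : (0:ℝ) < (1/(2*σ2))^2 + t^2 := by positivity
    have hklt : k < (1/(2*σ2))^2 := by
      have h4 : (0:ℝ) < 4*σ2^2 := by positivity
      have e1 : k = ρ^2/(4*σ2^2) := by rw [hkdef, div_pow, div_div]; ring_nf
      have e2 : ((1:ℝ)/(2*σ2))^2 = 1/(4*σ2^2) := by rw [div_pow, one_pow, mul_pow]; norm_num
      rw [e1, e2, div_lt_div_iff₀ h4 h4]
      nlinarith [hσ2, h4]
    have key : k * (1/(2*σ2)) / ((1/(2*σ2))^2 + t^2) < 1/(2*σ2) := by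
      rw [div_lt_iff₀ hden]
      have hk : 0 ≤ k := by rw [hkdef]; positivity
      nlinarith [sq_nonneg t, hσ2]
    rw [h1, hb1re, hnsq]
    have heq : k * -(1/(2*σ2)) / ((1/(2*σ2))^2 + t^2)
        = -(k * (1/(2*σ2)) / ((1/(2*σ2))^2 + t^2)) := by ring
    rw [heq]
    linarith
  have hb2ne : b2 ≠ 0 := fun h => by rw [h] at hb2re; simp at hb2re
  -- the exponent identity
  have hexp : ∀ x y : ℝ,
      b1 * (y:ℂ)^2 + ((ρ/σ2*x : ℝ):ℂ) * (y:ℂ) + (Complex.I*(s:ℂ) - 1/(2*(σ2:ℂ))) * (x:ℂ)^2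
      = ((-(x^2 - 2*ρ*x*y + y^2)/(2*σ2) : ℝ) : ℂ) + ((s*x^2 + t*y^2 : ℝ):ℂ) * Complex.I := by
    intro x y
    rw [hb1def]
    push_cast
    field_simp
    ring
  have hdnn : ∀ p : ℝ × ℝ, 0 ≤ binormalDensity ρ p := fun p => by
    rw [hdef p]; positivity
  -- the integrand identity
  have hFeq : ∀ p : ℝ × ℝ,
      ((binormalDensity ρ p).toNNReal : ℝ≥0)
          • Complex.exp (Complex.I * ((s : ℂ) * (p.1 : ℂ) ^ 2 + (t : ℂ) * (p.2 : ℂ) ^ 2))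
      = (C:ℂ) * Complex.exp (b1 * (p.2:ℂ)^2 + ((ρ/σ2*p.1 : ℝ):ℂ) * (p.2:ℂ)
          + (Complex.I*(s:ℂ) - 1/(2*(σ2:ℂ))) * (p.1:ℂ)^2) := by
    intro p
    rw [NNReal.smul_def, Real.coe_toNNReal _ (hdnn p), Complex.real_smul]
    rw [hexp p.1 p.2, hdef p]
    push_cast
    rw [mul_assoc, ← Complex.exp_add]
    congr 1
    ring
  -- integrability
  have hav : |ρ| < 1 := abs_lt.mpr ⟨hρ1, hρ2⟩
  set ε : ℝ := (1 - |ρ|)/(2*σ2) with hεdef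
  clear_value ε
  have hε : 0 < ε := by rw [hεdef]; exact div_pos (by linarith) (by positivity)
  have hbound : ∀ x y : ℝ, -(x^2 - 2*ρ*x*y + y^2)/(2*σ2) ≤ -ε*x^2 + -ε*y^2 := by
    intro x y
    have h2 : 2*ρ*x*y ≤ |ρ| * (x^2 + y^2) := by
      have hp1 : 0 ≤ |ρ| + ρ := by have := neg_abs_le ρ; linarith
      have hp2 : 0 ≤ |ρ| - ρ := by have := le_abs_self ρ; linarith
      nlinarith [mul_nonneg hp1 (sq_nonneg (x-y)), mul_nonneg hp2 (sq_nonneg (x+y))]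
    have he : -ε*x^2 + -ε*y^2 = -((1-|ρ|)*(x^2+y^2))/(2*σ2) := by
      rw [hεdef]; field_simp; ring
    rw [he, div_le_div_iff_of_pos_right (by positivity : (0:ℝ) < 2*σ2)]
    linarith [h2]
  have hInt : Integrable (fun p : ℝ × ℝ => (C:ℂ) * Complex.exp (b1 * (p.2:ℂ)^2
      + ((ρ/σ2*p.1 : ℝ):ℂ) * (p.2:ℂ) + (Complex.I*(s:ℂ) - 1/(2*(σ2:ℂ))) * (p.1:ℂ)^2))
      (volume.prod volume) := by
    apply Integrable.mono'
      (g := fun p : ℝ × ℝ => C * (Real.exp (-ε*p.1^2) * Real.exp (-ε*p.2^2)))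
    · exact ((integrable_exp_neg_mul_sq hε).mul_prod (integrable_exp_neg_mul_sq hε)).const_mul C
    · apply Continuous.aestronglyMeasurable
      set_option maxHeartbeats 1000000 in fun_prop
    · filter_upwards with p
      rw [norm_mul, hexp p.1 p.2]
      simp only [Complex.norm_exp, Complex.norm_real, Real.norm_eq_abs]
      have : (((-(p.1^2 - 2*ρ*p.1*p.2 + p.2^2)/(2*σ2) : ℝ) : ℂ)
          + ((s*p.1^2 + t*p.2^2 : ℝ):ℂ) * Complex.I).re
          = -(p.1^2 - 2*ρ*p.1*p.2 + p.2^2)/(2*σ2) := by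
        simp only [Complex.add_re, Complex.ofReal_re, Complex.mul_re, Complex.mul_im,
          Complex.I_re, Complex.I_im, Complex.ofReal_im]
        ring
      rw [this, ← Real.exp_add]
      rw [abs_of_pos hC]
      exact mul_le_mul_of_nonneg_left (Real.exp_le_exp.mpr (hbound p.1 p.2)) hC.le
  have hmeas : Measurable (fun p : ℝ × ℝ => (binormalDensity ρ p).toNNReal) := by
    apply Measurable.real_toNNReal
    have : Continuous (binormalDensity ρ) := by
      unfold binormalDensity
      fun_prop
    exact this.measurable
  -- compute the integral
  have hmain : (∫ p : ℝ × ℝ, Complex.exp (Complex.I * ((s : ℂ) * (p.1 : ℂ) ^ 2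
        + (t : ℂ) * (p.2 : ℂ) ^ 2))
        ∂((volume : Measure (ℝ × ℝ)).withDensity
            (fun p => ENNReal.ofReal (binormalDensity ρ p))))
      = (C:ℂ) * (((Real.pi:ℂ)/ -b1)^((1:ℂ)/2) * ((Real.pi:ℂ)/ -b2)^((1:ℂ)/2)) := by
    rw [show (fun p : ℝ × ℝ => ENNReal.ofReal (binormalDensity ρ p))
        = (fun p : ℝ × ℝ => (((fun q : ℝ × ℝ => (binormalDensity ρ q).toNNReal) p : ℝ≥0) : ℝ≥0∞))
        from rfl]
    rw [integral_withDensity_eq_integral_smul hmeas]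
    simp only [hFeq]
    rw [MeasureTheory.Measure.volume_eq_prod]
    set_option maxHeartbeats 2000000 in rw [integral_prod _ hInt]
    have inner : ∀ x : ℝ, (∫ y : ℝ, (C:ℂ) * Complex.exp (b1 * (y:ℂ)^2
          + ((ρ/σ2*x : ℝ):ℂ) * (y:ℂ) + (Complex.I*(s:ℂ) - 1/(2*(σ2:ℂ))) * (x:ℂ)^2))
        = (C:ℂ) * (((Real.pi:ℂ)/ -b1)^((1:ℂ)/2)
            * Complex.exp (b2 * (x:ℂ)^2 + 0 * (x:ℂ) + 0)) := by
      intro x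
      rw [integral_const_mul, integral_cexp_quadratic hb1relt]
      have e : (Complex.I*(s:ℂ) - 1/(2*(σ2:ℂ))) * (x:ℂ)^2 - (((ρ/σ2*x : ℝ):ℂ))^2/(4*b1)
          = b2 * (x:ℂ)^2 + 0 * (x:ℂ) + 0 := by
        rw [hb2def, hkdef]
        push_cast
        field_simp [hσ2C, hb1ne]
        ring
      rw [e]
    simp only [inner]
    rw [integral_const_mul]
    congr 1
    rw [integral_const_mul, integral_cexp_quadratic hb2re]
    norm_num
  rw [hmain]
  -- final algebra
  have hpow : ∀ z : ℂ, z ≠ 0 → (z^((1:ℂ)/2))^2 = z := by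
    intro z hz
    rw [sq, ← Complex.cpow_add _ _ hz]
    norm_num
  have hπC : (Real.pi : ℂ) ≠ 0 := Complex.ofReal_ne_zero.mpr hπ.ne'
  have h1 : ((Real.pi:ℂ)/ -b1) ≠ 0 := div_ne_zero hπC (neg_ne_zero.mpr hb1ne)
  have h2 : ((Real.pi:ℂ)/ -b2) ≠ 0 := div_ne_zero hπC (neg_ne_zero.mpr hb2ne)
  have hC2 : (C:ℂ)^2 = 1/(4*(Real.pi:ℂ)^2*(σ2:ℂ)) := by
    have hr : C^2 = 1/(4*Real.pi^2*σ2) := by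
      rw [hCdef, div_pow, one_pow, mul_pow, mul_pow, Real.sq_sqrt hσ2.le]
      ring_nf
    calc (C:ℂ)^2 = ((C^2 : ℝ):ℂ) := by push_cast; ring
    _ = _ := by rw [hr]; push_cast; ring
  have hb1ne' : Complex.I * (t:ℂ) - 1/(2*(σ2:ℂ)) ≠ 0 := hb1def ▸ hb1ne
  have hdenom : ((1 - 2*Complex.I*(s:ℂ)*(σ2:ℂ)) * (1 - 2*Complex.I*(t:ℂ)*(σ2:ℂ)) - (ρ:ℂ)^2)
      = 4*(σ2:ℂ)^2*(b1*b2) := by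
    have hB : b1 * b2 = b1 * (Complex.I*(s:ℂ) - 1/(2*(σ2:ℂ))) - (k:ℂ) := by
      rw [hb2def]
      field_simp
    rw [hB, hb1def, hkdef]
    push_cast
    field_simp
    ring
  rw [← hcast, hdenom, mul_pow, mul_pow, hpow _ h1, hpow _ h2, hC2]
  field_simp [hπC, hσ2C, hb1ne, hb2ne]
end

section
/- Let m ≥ 2 and let B be any finite bit string. Let c⁽¹⁾ be the number of occurrences in B of the m-bit pattern consisting of a 1 followed by m−1 zeros, and let c⁽²⁾ be the number of occurrences in B of the m-bit pattern consisting of m−1 zeros followed by a 1. Then |c⁽¹⁾ − c⁽²⁾| ≤ 1. -/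
open scoped Classical

/-- `T` occurs in the block `B` at position `k`: `B (k+i) = T i` for all `i < m`. -/
def occursAt {m M : ℕ} (T : Fin m → Bool) (B : Fin M → Bool) (k : ℕ) : Prop :=
  ∀ i : Fin m, ∀ h : k + i.1 < M, B ⟨k + i.1, h⟩ = T i

/-- The number of occurrences of the template `T` in the block `B`. -/
noncomputable def occCount {m M : ℕ} (T : Fin m → Bool) (B : Fin M → Bool) : ℕ :=
  ((Finset.range (M + 1 - m)).filter (fun k => occursAt T B k)).card

private lemma aux_card_le (m M : ℕ) (hm : 2 ≤ m) (b : ℕ → Bool)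
    (S1 S2 : Finset ℕ)
    (hS1 : ∀ k, k ∈ S1 ↔ k + m ≤ M ∧ b k = true ∧ ∀ i, 0 < i → i < m → b (k + i) = false)
    (hS2 : ∀ k, k ∈ S2 ↔ k + m ≤ M ∧ b (k + (m - 1)) = true ∧
      ∀ i, i < m - 1 → b (k + i) = false) :
    S1.card ≤ S2.card + 1 := by
  rcases S1.eq_empty_or_nonempty with h1 | h1
  · simp [h1]
  set a := S1.max' h1 with ha
  have haS : a ∈ S1 := S1.max'_mem h1
  have haP := (hS1 a).mp haS
  -- for k in S1.erase a, let p k be the least position > k with a one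
  set p : ℕ → ℕ := fun k => sInf {q | k < q ∧ b q = true} with hp
  have hfact : ∀ k ∈ S1.erase a,
      k + m ≤ p k ∧ p k ≤ a ∧ b (p k) = true ∧
        ∀ q, k < q → q < p k → b q = false := by
    intro k hk
    obtain ⟨hka, hkS⟩ := Finset.mem_erase.mp hk
    have hkP := (hS1 k).mp hkS
    have hklt : k < a := lt_of_le_of_ne (S1.le_max' k hkS) hka
    have hne : ({q | k < q ∧ b q = true}).Nonempty := ⟨a, hklt, haP.2.1⟩
    have hmem := Nat.sInf_mem hne
    have hklt2 : k < p k := hmem.1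
    have hbpk : b (p k) = true := hmem.2
    have hpa : p k ≤ a := Nat.sInf_le ⟨hklt, haP.2.1⟩
    have hmin : ∀ q, k < q → q < p k → b q = false := by
      intro q hq1 hq2
      have := Nat.notMem_of_lt_sInf (s := {q | k < q ∧ b q = true}) hq2
      simp only [Set.mem_setOf_eq, not_and] at this
      simpa using this hq1
    have hkm : k + m ≤ p k := by
      by_contra hcon
      push_neg at hcon
      have h0 : 0 < p k - k := by omega
      have h1 : p k - k < m := by omega
      have := hkP.2.2 (p k - k) h0 h1
      have heq : k + (p k - k) = p k := by omega
      rw [heq] at this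
      exact absurd hmem.2 (by simpa using this)
    exact ⟨hkm, hpa, hmem.2, hmin⟩
  have key : (S1.erase a).card ≤ S2.card := by
    apply Finset.card_le_card_of_injOn (fun k => p k - (m - 1))
    · intro k hk
      show p k - (m - 1) ∈ S2
      obtain ⟨hkm, hpa, hbp, hmin⟩ := hfact k hk
      obtain ⟨hka, hkS⟩ := Finset.mem_erase.mp hk
      have hkP := (hS1 k).mp hkS
      rw [hS2]
      refine ⟨by omega, ?_, ?_⟩
      · have heq : p k - (m - 1) + (m - 1) = p k := by omega
        rw [heq]; exact hbp
      · intro i hi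
        apply hmin
        · omega
        · omega
    · intro k hk k' hk' hfeq
      have hfeq' : p k - (m - 1) = p k' - (m - 1) := hfeq
      clear hfeq
      by_contra hne
      obtain ⟨hkm, hpa, hbp, hmin⟩ := hfact k hk
      obtain ⟨hkm', hpa', hbp', hmin'⟩ := hfact k' hk'
      have hbk := ((hS1 k).mp (Finset.mem_of_mem_erase hk)).2.1
      have hbk' := ((hS1 k').mp (Finset.mem_of_mem_erase hk')).2.1
      rcases lt_trichotomy k k' with h | h | h
      · have : p k ≤ k' := Nat.sInf_le ⟨h, hbk'⟩
        omega
      · exact hne h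
      · have : p k' ≤ k := Nat.sInf_le ⟨h, hbk⟩
        omega
  have := Finset.card_erase_add_one haS
  omega

private lemma aux_card_le' (m M : ℕ) (hm : 2 ≤ m) (b : ℕ → Bool)
    (S1 S2 : Finset ℕ)
    (hS1 : ∀ k, k ∈ S1 ↔ k + m ≤ M ∧ b k = true ∧ ∀ i, 0 < i → i < m → b (k + i) = false)
    (hS2 : ∀ k, k ∈ S2 ↔ k + m ≤ M ∧ b (k + (m - 1)) = true ∧
      ∀ i, i < m - 1 → b (k + i) = false) :
    S2.card ≤ S1.card + 1 := by
  rcases S2.eq_empty_or_nonempty with h2 | h2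
  · simp [h2]
  set c := S2.min' h2 with hc
  have hcS : c ∈ S2 := S2.min'_mem h2
  have hcP := (hS2 c).mp hcS
  -- for j in S2.erase c, let q j be the greatest position ≤ j - 1 with a one
  set q : ℕ → ℕ := fun j => Nat.findGreatest (fun r => b r = true) (j - 1) with hq
  -- key separation: if j < j' and both are B-occurrences, then j + (m-1) ≤ j' - 1
  have hsep : ∀ j j', j ∈ S2 → j' ∈ S2 → j < j' → j + (m - 1) ≤ j' - 1 := by
    intro j j' hj hj' hlt
    have hjP := (hS2 j).mp hj
    have hj'P := (hS2 j').mp hj'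
    by_contra hcon
    push_neg at hcon
    have h0 : j + (m - 1) - j' < m - 1 := by omega
    have := hj'P.2.2 (j + (m - 1) - j') h0
    have heq : j' + (j + (m - 1) - j') = j + (m - 1) := by omega
    rw [heq] at this
    exact absurd hjP.2.1 (by simp [this])
  have hfact : ∀ j ∈ S2.erase c,
      c + (m - 1) ≤ q j ∧ q j ≤ j - 1 ∧ b (q j) = true ∧
        ∀ r, q j < r → r ≤ j - 1 → b r = false := by
    intro j hj
    obtain ⟨hjc, hjS⟩ := Finset.mem_erase.mp hj
    have hjP := (hS2 j).mp hjS
    have hclt : c < j := lt_of_le_of_ne (S2.min'_le j hjS) (Ne.symm hjc)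
    have hcle : c + (m - 1) ≤ j - 1 := hsep c j hcS hjS hclt
    have hge : c + (m - 1) ≤ q j := Nat.le_findGreatest (P := fun r => b r = true) hcle hcP.2.1
    have hle : q j ≤ j - 1 := Nat.findGreatest_le _
    have hbq : b (q j) = true := Nat.findGreatest_spec (P := fun r => b r = true) hcle hcP.2.1
    have hmax : ∀ r, q j < r → r ≤ j - 1 → b r = false := by
      intro r h1 h2
      have := Nat.findGreatest_is_greatest (P := fun r => b r = true) h1 h2
      simpa using this
    exact ⟨hge, hle, hbq, hmax⟩
  have key : (S2.erase c).card ≤ S1.card := by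
    apply Finset.card_le_card_of_injOn q
    · intro j hj
      obtain ⟨hge, hle, hbq, hmax⟩ := hfact j hj
      obtain ⟨hjc, hjS⟩ := Finset.mem_erase.mp hj
      have hjP := (hS2 j).mp hjS
      rw [Finset.mem_coe, hS1]
      refine ⟨by omega, hbq, ?_⟩
      intro i h0 hi
      by_cases hcase : q j + i ≤ j - 1
      · exact hmax _ (by omega) hcase
      · have h0' : q j + i - j < m - 1 := by omega
        have := hjP.2.2 (q j + i - j) h0'
        have heq : j + (q j + i - j) = q j + i := by omega
        rw [heq] at this
        exact this
    · intro j hj j' hj' hfeq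
      by_contra hne
      obtain ⟨hge, hle, hbq, hmax⟩ := hfact j hj
      obtain ⟨hge', hle', hbq', hmax'⟩ := hfact j' hj'
      have hjS := Finset.mem_of_mem_erase hj
      have hj'S := Finset.mem_of_mem_erase hj'
      rcases lt_trichotomy j j' with h | h | h
      · have hsep' := hsep j j' hjS hj'S h
        have h3 : j + (m - 1) ≤ q j' :=
          Nat.le_findGreatest (P := fun r => b r = true) hsep' ((hS2 j).mp hjS).2.1
        omega
      · exact hne h
      · have hsep' := hsep j' j hj'S hjS h
        have h3 : j' + (m - 1) ≤ q j :=
          Nat.le_findGreatest (P := fun r => b r = true) hsep' ((hS2 j').mp hj'S).2.1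
        omega
  have := Finset.card_erase_add_one hcS
  omega

/-- The numbers of occurrences of the pattern `1 0 ⋯ 0` (a one followed by `m-1` zeros) and
of the pattern `0 ⋯ 0 1` (`m-1` zeros followed by a one) in any bit string differ by at most 1. -/
theorem paired_patterns_count_diff (m M : ℕ) (hm : 2 ≤ m) (B : Fin M → Bool) :
    |(occCount (fun i : Fin m => decide (i.1 = 0)) B : ℤ)
      - (occCount (fun i : Fin m => decide (i.1 = m - 1)) B : ℤ)| ≤ 1 := by
  by_cases hM : m ≤ M
  case neg =>
    have h0 : M + 1 - m = 0 := by omega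
    simp [occCount, h0]
  -- extend B to a function on ℕ
  set b : ℕ → Bool := fun n => if h : n < M then B ⟨n, h⟩ else false with hb
  set S1 := (Finset.range (M + 1 - m)).filter
    (fun k => occursAt (fun i : Fin m => decide (i.1 = 0)) B k) with hS1def
  set S2 := (Finset.range (M + 1 - m)).filter
    (fun k => occursAt (fun i : Fin m => decide (i.1 = m - 1)) B k) with hS2def
  have hbB : ∀ n (h : n < M), b n = B ⟨n, h⟩ := by
    intro n h; simp [hb, h]
  have hS1 : ∀ k, k ∈ S1 ↔ k + m ≤ M ∧ b k = true ∧
      ∀ i, 0 < i → i < m → b (k + i) = false := by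
    intro k
    rw [hS1def, Finset.mem_filter, Finset.mem_range]
    constructor
    · rintro ⟨hk, hocc⟩
      have hkm : k + m ≤ M := by omega
      refine ⟨hkm, ?_, ?_⟩
      · have h0 : k + (0 : ℕ) < M := by omega
        have := hocc ⟨0, by omega⟩ h0
        simp at this
        rw [hbB k (by omega)]
        simpa using this
      · intro i h0 hi
        have hlt : k + i < M := by omega
        have hB := hocc ⟨i, hi⟩ hlt
        rw [hbB (k + i) hlt]
        simpa [show i ≠ 0 by omega] using hB
    · rintro ⟨hkm, hb0, hrest⟩
      refine ⟨by omega, ?_⟩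
      intro i h
      rw [← hbB (k + i.1) h]
      by_cases hi0 : i.1 = 0
      · have heq : k + i.1 = k := by omega
        simp [heq, hi0, hb0]
      · have := hrest i.1 (by omega) i.2
        simp [this, hi0]
  have hS2 : ∀ k, k ∈ S2 ↔ k + m ≤ M ∧ b (k + (m - 1)) = true ∧
      ∀ i, i < m - 1 → b (k + i) = false := by
    intro k
    rw [hS2def, Finset.mem_filter, Finset.mem_range]
    constructor
    · rintro ⟨hk, hocc⟩
      have hkm : k + m ≤ M := by omega
      refine ⟨hkm, ?_, ?_⟩
      · have hlt : k + (m - 1) < M := by omega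
        have := hocc ⟨m - 1, by omega⟩ hlt
        simp at this
        rw [hbB (k + (m - 1)) hlt]
        simpa using this
      · intro i hi
        have hlt : k + i < M := by omega
        have hB := hocc ⟨i, by omega⟩ hlt
        rw [hbB (k + i) hlt]
        simpa [show i ≠ m - 1 by omega] using hB
    · rintro ⟨hkm, hb0, hrest⟩
      refine ⟨by omega, ?_⟩
      intro i h
      rw [← hbB (k + i.1) h]
      by_cases hi0 : i.1 = m - 1
      · have heq : k + i.1 = k + (m - 1) := by omega
        simp [heq, hi0, hb0]
      · have := hrest i.1 (by omega)
        simp [this, hi0]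
  have h1 := aux_card_le m M hm b S1 S2 hS1 hS2
  have h2 := aux_card_le' m M hm b S1 S2 hS1 hS2
  have hc1 : occCount (fun i : Fin m => decide (i.1 = 0)) B = S1.card := rfl
  have hc2 : occCount (fun i : Fin m => decide (i.1 = m - 1)) B = S2.card := rfl
  rw [hc1, hc2, abs_le]
  omega
end
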